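/- arXiv:1404.6677 — 3 statements merged into one kernel-verified Lean document; each statement's English description precedes it below -/
import Mathlib

section
/- Let G = (V,E) be a finite connected bipartite simple graph. Then there is no fully supported probability measure μ on V satisfying NCOND, i.e., such that for every facet F of G, μ(F) < μ(E(F)). -/
open Finset

def nbhd {V : Type*} [Fintype V] [DecidableEq V] (G : SimpleGraph V) [DecidableRel G.Adj]
    (U : Finset V) : Finset V :=
  U.biUnion fun u => G.neighborFinset u

def IsFacet {V : Type*} (G : SimpleGraph V) (F : Finset V) : Prop :=
  F.Nonempty ∧ ∀ u ∈ F, ∀ v ∈ F, ¬ G.Adj u v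

theorem stmt_6 {V : Type*} [Fintype V] [DecidableEq V] (G : SimpleGraph V)
    [DecidableRel G.Adj] (hconn : G.Connected) (hbip : G.Colorable 2) :
    ¬ ∃ μ : V → ℝ, (∀ v, 0 < μ v) ∧ (∑ v, μ v = 1) ∧
      ∀ F : Finset V, IsFacet G F → ∑ v ∈ F, μ v < ∑ v ∈ nbhd G F, μ v := by
  rintro ⟨μ, hpos, _hsum, hlt⟩
  obtain ⟨C⟩ := hbip
  classical
  set F0 : Finset V := univ.filter (fun v => C v = 0) with hF0
  set F1 : Finset V := univ.filter (fun v => C v = 1) with hF1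
  have hcol : ∀ v : V, v ∈ F0 ∨ v ∈ F1 := by
    intro v
    simp only [hF0, hF1, mem_filter, mem_univ, true_and]
    omega
  -- independence of color classes
  have hfacet : ∀ (i : Fin 2) (F : Finset V), F = univ.filter (fun v => C v = i) →
      F.Nonempty → IsFacet G F := by
    intro i F hF hne
    refine ⟨hne, ?_⟩
    intro u hu v hv hadj
    rw [hF, mem_filter] at hu hv
    exact C.valid hadj (hu.2.trans hv.2.symm)
  -- neighborhoods land in the other class
  have hsub0 : nbhd G F0 ⊆ F1 := by
    intro v hv
    simp only [nbhd, mem_biUnion, SimpleGraph.mem_neighborFinset] at hv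
    obtain ⟨u, hu, hadj⟩ := hv
    rw [hF0, mem_filter] at hu
    have := C.valid hadj
    simp only [hF1, mem_filter, mem_univ, true_and]
    omega
  have hsub1 : nbhd G F1 ⊆ F0 := by
    intro v hv
    simp only [nbhd, mem_biUnion, SimpleGraph.mem_neighborFinset] at hv
    obtain ⟨u, hu, hadj⟩ := hv
    rw [hF1, mem_filter] at hu
    have := C.valid hadj
    simp only [hF0, mem_filter, mem_univ, true_and]
    omega
  have key : ∀ (A B : Finset V), IsFacet G A → nbhd G A ⊆ B →
      ∑ v ∈ A, μ v < ∑ v ∈ B, μ v := by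
    intro A B hA hsub
    refine (hlt A hA).trans_le ?_
    exact sum_le_sum_of_subset_of_nonneg hsub (fun v _ _ => (hpos v).le)
  have hne : (univ : Finset V).Nonempty := by
    obtain ⟨v⟩ := hconn.nonempty
    exact ⟨v, mem_univ v⟩
  by_cases h0 : F0.Nonempty
  · have h01 : ∑ v ∈ F0, μ v < ∑ v ∈ F1, μ v :=
      key F0 F1 (hfacet 0 F0 hF0 h0) hsub0
    have h1 : F1.Nonempty := by
      by_contra h
      rw [not_nonempty_iff_eq_empty] at h
      rw [h, sum_empty] at h01
      exact absurd (sum_pos (fun v _ => hpos v) h0) (not_lt.2 h01.le)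
    have h10 : ∑ v ∈ F1, μ v < ∑ v ∈ F0, μ v :=
      key F1 F0 (hfacet 1 F1 hF1 h1) hsub1
    linarith
  · rw [not_nonempty_iff_eq_empty] at h0
    have h1 : F1.Nonempty := by
      obtain ⟨v, _⟩ := hne
      rcases hcol v with hv | hv
      · rw [h0] at hv; exact absurd hv (notMem_empty v)
      · exact ⟨v, hv⟩
    have h10 : ∑ v ∈ F1, μ v < ∑ v ∈ F0, μ v :=
      key F1 F0 (hfacet 1 F1 hF1 h1) hsub1
    rw [h0, sum_empty] at h10
    exact absurd (sum_pos (fun v _ => hpos v) h1) (not_lt.2 h10.le)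
end

section
/- Let G = (V,E) be a finite connected simple graph with at least 2 vertices. Then G is non-bipartite if and only if there exists a fully supported probability measure μ on V such that for every facet F of G, μ(F) < μ(E(F)). -/
open Finset

private lemma exists_adj_aux {V : Type*} [Fintype V] (G : SimpleGraph V)
    (hconn : G.Connected) (hcard : 2 ≤ Fintype.card V) (v : V) : ∃ w, G.Adj v w := by
  obtain ⟨w, hw⟩ := Fintype.exists_ne_of_one_lt_card (by omega) v
  obtain ⟨p⟩ := hconn.preconnected v w
  cases p with
  | nil => exact absurd rfl hw
  | cons h q => exact ⟨_, h⟩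

/-- A nonempty set closed under edges in a connected graph is everything. -/
private lemma closed_eq_univ {V : Type*} (G : SimpleGraph V)
    (hconn : G.Connected) (S : Set V) (hne : ∃ a, a ∈ S)
    (hclosed : ∀ a ∈ S, ∀ b, G.Adj a b → b ∈ S) : ∀ v, v ∈ S := by
  intro v
  obtain ⟨a, ha⟩ := hne
  obtain ⟨p⟩ := hconn.preconnected a v
  suffices h : ∀ (x y : V) (p : G.Walk x y), x ∈ S → y ∈ S from h a v p ha
  intro x y q
  induction q with
  | nil => exact id
  | cons h q ih => exact fun hx => ih (hclosed _ hx _ h)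

theorem stmt_7 {V : Type*} [Fintype V] [DecidableEq V] (G : SimpleGraph V)
    [DecidableRel G.Adj] (hconn : G.Connected) (hcard : 2 ≤ Fintype.card V) :
    ¬ G.Colorable 2 ↔
      ∃ μ : V → ℝ, (∀ v, 0 < μ v) ∧ (∑ v, μ v = 1) ∧
        ∀ F : Finset V, IsFacet G F → ∑ v ∈ F, μ v < ∑ v ∈ nbhd G F, μ v := by
  constructor
  · intro hnb
    -- μ v = deg v / D
    set D : ℝ := ∑ v, (G.degree v : ℝ) with hD
    have hdegpos : ∀ v : V, 0 < G.degree v := by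
      intro v
      rw [SimpleGraph.degree_pos_iff_exists_adj]
      exact exists_adj_aux G hconn hcard v
    have hDpos : 0 < D := by
      apply Finset.sum_pos
      · intro v _
        exact_mod_cast hdegpos v
      · haveI : Nonempty V := Fintype.card_pos_iff.mp (by omega)
        exact Finset.univ_nonempty
    refine ⟨fun v => (G.degree v : ℝ) / D, ?_, ?_, ?_⟩
    · intro v
      exact div_pos (by exact_mod_cast hdegpos v) hDpos
    · rw [← Finset.sum_div]
      exact div_self hDpos.ne'
    · intro F hF
      -- key: natural-number inequality on degree sums
      have key : ∑ v ∈ F, G.degree v < ∑ u ∈ nbhd G F, G.degree u := by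
        have hsub : ∀ v ∈ F, G.neighborFinset v ⊆ nbhd G F := by
          intro v hv
          exact Finset.subset_biUnion_of_mem (fun u => G.neighborFinset u) hv
        have h1 : ∑ v ∈ F, G.degree v
            = ∑ v ∈ F, ∑ u ∈ nbhd G F, (if G.Adj v u then 1 else 0) := by
          apply Finset.sum_congr rfl
          intro v hv
          rw [← Finset.card_filter]
          have : Finset.filter (fun u => G.Adj v u) (nbhd G F) = G.neighborFinset v := by
            apply Finset.Subset.antisymm
            · intro u hu
              rw [Finset.mem_filter] at hu
              exact (G.mem_neighborFinset v u).mpr hu.2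
            · intro u hu
              rw [Finset.mem_filter]
              exact ⟨hsub v hv hu, (G.mem_neighborFinset v u).mp hu⟩
          rw [this, SimpleGraph.card_neighborFinset_eq_degree]
        rw [h1, Finset.sum_comm]
        apply Finset.sum_lt_sum
        · intro u _
          rw [← Finset.card_filter]
          calc (Finset.filter (fun v => G.Adj v u) F).card
              ≤ (G.neighborFinset u).card := by
                apply Finset.card_le_card
                intro v hv
                rw [Finset.mem_filter] at hv
                exact (G.mem_neighborFinset u v).mpr hv.2.symm
            _ = G.degree u := SimpleGraph.card_neighborFinset_eq_degree G u
        · -- strict for some u ∈ nbhd F : some neighbor of u outside F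
          by_contra hall
          push_neg at hall
          -- then all neighbors of each u ∈ nbhd F lie in F, giving a 2-coloring
          have hallF : ∀ u ∈ nbhd G F, ∀ w, G.Adj u w → w ∈ F := by
            intro u hu w hw
            have h2 := hall u hu
            rw [← Finset.card_filter] at h2
            have hle : (G.neighborFinset u).card
                ≤ (Finset.filter (fun v => G.Adj v u) F).card := by
              calc (G.neighborFinset u).card = G.degree u :=
                    SimpleGraph.card_neighborFinset_eq_degree G u
                _ ≤ _ := h2
            have hsub2 : Finset.filter (fun v => G.Adj v u) F ⊆ G.neighborFinset u := by
              intro v hv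
              rw [Finset.mem_filter] at hv
              exact (G.mem_neighborFinset u v).mpr hv.2.symm
            have heq := Finset.eq_of_subset_of_card_le hsub2 hle
            have : w ∈ Finset.filter (fun v => G.Adj v u) F := by
              rw [heq]
              exact (G.mem_neighborFinset u w).mpr hw
            exact (Finset.mem_filter.mp this).1
          -- the set F ∪ nbhd F is closed under edges
          have hunionV : ∀ v : V, v ∈ (↑(F ∪ nbhd G F) : Set V) := by
            apply closed_eq_univ G hconn
            · obtain ⟨a, ha⟩ := hF.1
              exact ⟨a, by simp [ha]⟩
            · intro a ha b hab
              simp only [Finset.coe_union, Set.mem_union, Finset.mem_coe] at ha ⊢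
              rcases ha with ha | ha
              · right
                exact Finset.mem_biUnion.mpr ⟨a, ha, (G.mem_neighborFinset a b).mpr hab⟩
              · left
                exact hallF a ha b hab
          -- build a proper 2-coloring
          have : G.Colorable 2 := by
            refine ⟨SimpleGraph.Coloring.mk (fun v => if v ∈ F then 0 else 1) ?_⟩
            intro a b hab
            by_cases haF : a ∈ F <;> by_cases hbF : b ∈ F
            · exact absurd hab (hF.2 a haF b hbF)
            · simp [haF, hbF]
            · simp [haF, hbF]
            · -- both outside F: a ∈ nbhd F, so b ∈ F, contradiction
              exfalso
              have ha := hunionV a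
              simp only [Finset.coe_union, Set.mem_union, Finset.mem_coe] at ha
              rcases ha with h | h
              · exact haF h
              · exact hbF (hallF a h b hab)
          exact hnb this
      -- convert to real inequality
      have hcast : (∑ v ∈ F, (G.degree v : ℝ)) < ∑ u ∈ nbhd G F, (G.degree u : ℝ) := by
        exact_mod_cast key
      rw [← Finset.sum_div, ← Finset.sum_div]
      exact (div_lt_div_iff_of_pos_right hDpos).mpr hcast
  · rintro ⟨μ, hpos, _, hkey⟩ ⟨C⟩
    -- Let A, B be the color classes
    obtain ⟨x, y, hxy⟩ : ∃ x y, G.Adj x y := by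
      obtain ⟨x⟩ := Fintype.card_pos_iff.mp (by omega : 0 < Fintype.card V)
      obtain ⟨y, hy⟩ := exists_adj_aux G hconn hcard x
      exact ⟨x, y, hy⟩
    classical
    set A : Finset V := Finset.univ.filter (fun v => C v = C x) with hA
    set B : Finset V := Finset.univ.filter (fun v => C v ≠ C x) with hB
    have hAfacet : IsFacet G A := by
      refine ⟨⟨x, by simp [hA]⟩, ?_⟩
      intro u hu v hv huv
      rw [hA, Finset.mem_filter] at hu hv
      exact C.valid huv (hu.2.trans hv.2.symm)
    have hBfacet : IsFacet G B := by
      refine ⟨⟨y, by simp [hB, (C.valid hxy).symm]⟩, ?_⟩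
      intro u hu v hv huv
      rw [hB, Finset.mem_filter] at hu hv
      -- u, v both ≠ C x; but colors are in Fin 2
      have h2 : ∀ i j k : Fin 2, i ≠ k → j ≠ k → i = j := by decide
      exact C.valid huv (h2 _ _ _ hu.2 hv.2)
    have hnA : nbhd G A ⊆ B := by
      intro u hu
      obtain ⟨a, ha, hadj⟩ := Finset.mem_biUnion.mp hu
      rw [hA, Finset.mem_filter] at ha
      rw [hB, Finset.mem_filter]
      refine ⟨Finset.mem_univ _, ?_⟩
      intro hcu
      exact C.valid ((G.mem_neighborFinset a u).mp hadj) (ha.2.trans hcu.symm)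
    have hnB : nbhd G B ⊆ A := by
      intro u hu
      obtain ⟨b, hb, hadj⟩ := Finset.mem_biUnion.mp hu
      rw [hB, Finset.mem_filter] at hb
      rw [hA, Finset.mem_filter]
      refine ⟨Finset.mem_univ _, ?_⟩
      have hadj' := (G.mem_neighborFinset b u).mp hadj
      have hne := C.valid hadj'
      -- C u ≠ C b, C b ≠ C x, colors in Fin 2 ⇒ C u = C x
      have : ∀ i j k : Fin 2, i ≠ j → j ≠ k → i = k := by decide
      exact this _ _ _ (Ne.symm hne) hb.2
    have h1 : ∑ v ∈ A, μ v < ∑ v ∈ B, μ v :=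
      lt_of_lt_of_le (hkey A hAfacet)
        (Finset.sum_le_sum_of_subset_of_nonneg hnA (fun v _ _ => (hpos v).le))
    have h2 : ∑ v ∈ B, μ v < ∑ v ∈ A, μ v :=
      lt_of_lt_of_le (hkey B hBfacet)
        (Finset.sum_le_sum_of_subset_of_nonneg hnB (fun v _ _ => (hpos v).le))
    exact absurd (h1.trans h2) (lt_irrefl _)
end

section
/- Let G be a non-bipartite connected finite simple graph, and consider the directed graph D with vertex set V ⊔ Ṽ (Ṽ a disjoint copy of V), arcs u → ṽ for each edge (u,v) of G, and arcs ũ → u for each u ∈ V. Then D is strongly connected. -/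
/-- The arc relation of the directed graph `D`: arcs `u → ṽ` for each edge `(u,v)` of `G`,
and arcs `ũ → u` for each vertex `u` (here `inl` is `V` and `inr` is its copy `Ṽ`). -/
def dirStep {V : Type*} (G : SimpleGraph V) : V ⊕ V → V ⊕ V → Prop := fun x y =>
  (∃ u v, G.Adj u v ∧ x = Sum.inl u ∧ y = Sum.inr v) ∨ (∃ u, x = Sum.inr u ∧ y = Sum.inl u)

lemma dirStep_adj {V : Type*} (G : SimpleGraph V) {a b : V} (h : G.Adj a b) :
    Relation.ReflTransGen (dirStep G) (Sum.inl a) (Sum.inl b) :=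
  Relation.ReflTransGen.head (Or.inl ⟨a, b, h, rfl, rfl⟩)
    (Relation.ReflTransGen.single (Or.inr ⟨b, rfl, rfl⟩))

lemma dirStep_walk {V : Type*} (G : SimpleGraph V) {a b : V} (w : G.Walk a b) :
    Relation.ReflTransGen (dirStep G) (Sum.inl a) (Sum.inl b) := by
  induction w with
  | nil => exact .refl
  | cons h _ ih => exact (dirStep_adj G h).trans ih

theorem stmt_14 {V : Type*} [Fintype V] (G : SimpleGraph V) (hconn : G.Connected)
    (hnonbip : ¬ G.Colorable 2) :
    ∀ x y : V ⊕ V, Relation.ReflTransGen (dirStep G) x y := by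
  -- G has an edge
  have hedge : ∃ a b, G.Adj a b := by
    by_contra h
    push_neg at h
    exact hnonbip ⟨SimpleGraph.Coloring.mk (fun _ => 0) (fun {u v} hadj => absurd hadj (h u v))⟩
  -- every vertex has a neighbor
  have hnbr : ∀ u : V, ∃ w, G.Adj u w := by
    intro u
    obtain ⟨a, b, hab⟩ := hedge
    obtain ⟨w⟩ := hconn.preconnected u a
    cases w with
    | nil => exact ⟨b, hab⟩
    | cons h _ => exact ⟨_, h⟩
  -- inl to inl
  have hll : ∀ u v : V, Relation.ReflTransGen (dirStep G) (Sum.inl u) (Sum.inl v) := by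
    intro u v
    obtain ⟨w⟩ := hconn.preconnected u v
    exact dirStep_walk G w
  -- inl to inr
  have hlr : ∀ u v : V, Relation.ReflTransGen (dirStep G) (Sum.inl u) (Sum.inr v) := by
    intro u v
    obtain ⟨w, hw⟩ := hnbr v
    exact (hll u w).tail (Or.inl ⟨w, v, hw.symm, rfl, rfl⟩)
  intro x y
  cases x with
  | inl u =>
    cases y with
    | inl v => exact hll u v
    | inr v => exact hlr u v
  | inr u =>
    have step : Relation.ReflTransGen (dirStep G) (Sum.inr u) (Sum.inl u) :=
      Relation.ReflTransGen.single (Or.inr ⟨u, rfl, rfl⟩)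
    cases y with
    | inl v => exact step.trans (hll u v)
    | inr v => exact step.trans (hlr u v)
end
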